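/- For every real m ≥ 18 and every real x ≥ L_m = (1 + √(4m-5))/2, one has R_same'(x) = 30x^2 + (2m-88)x + 28 - 11m/2 > 0; consequently R_same(x) = 10x^3 + (m-44)x^2 + (28 - 11m/2)x + 80 - 4m is strictly increasing on [L_m, ∞). -/

import Mathlib

theorem stmt_13 (m : ℝ) (hm : 18 ≤ m) :
    (∀ x : ℝ, (1 + Real.sqrt (4 * m - 5)) / 2 ≤ x →
      0 < 30 * x ^ 2 + (2 * m - 88) * x + 28 - 11 * m / 2) ∧
    StrictMonoOn (fun x : ℝ =>
        10 * x ^ 3 + (m - 44) * x ^ 2 + (28 - 11 * m / 2) * x + 80 - 4 * m)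
      (Set.Ici ((1 + Real.sqrt (4 * m - 5)) / 2)) := by
  set s := Real.sqrt (4 * m - 5) with hsdef
  have hs0 : 0 ≤ s := Real.sqrt_nonneg _
  have hs2 : s ^ 2 = 4 * m - 5 := Real.sq_sqrt (by linarith)
  have hs8 : 8 ≤ s := by nlinarith [hs2, hs0]
  have key : ∀ x : ℝ, (1 + s) / 2 ≤ x →
      0 < 30 * x ^ 2 + (2 * m - 88) * x + 28 - 11 * m / 2 := by
    intro x hx
    nlinarith [sq_nonneg (x - (1 + s) / 2),
      mul_nonneg (sub_nonneg.2 hx) hs0,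
      mul_nonneg (sub_nonneg.2 hx) (by linarith : (0:ℝ) ≤ m - 18),
      mul_nonneg hs0 (by linarith : (0:ℝ) ≤ m - 18)]
  refine ⟨key, ?_⟩
  apply strictMonoOn_of_deriv_pos (convex_Ici _)
  · exact Continuous.continuousOn (by continuity)
  · intro x hx
    rw [interior_Ici] at hx
    have h : HasDerivAt (fun x : ℝ =>
        10 * x ^ 3 + (m - 44) * x ^ 2 + (28 - 11 * m / 2) * x + 80 - 4 * m)
        (30 * x ^ 2 + (2 * m - 88) * x + 28 - 11 * m / 2) x := by
      have h1 := ((((hasDerivAt_pow 3 x).const_mul 10).add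
        ((hasDerivAt_pow 2 x).const_mul (m - 44))).add
        ((hasDerivAt_id x).const_mul (28 - 11 * m / 2)))
      have h2 := (h1.add_const 80).sub_const (4 * m)
      refine h2.congr_deriv ?_
      push_cast
      ring
    rw [h.deriv]
    exact key x (le_of_lt hx)
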